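/- Let A(q) be a square matrix over ℤ[q, q^{−1}], unitriangular with respect to a partial order (A_{λλ} = 1 and A_{λμ} = 0 unless λ ⊴ μ in the order, possibly λ = μ), such that A(q)·A(q^{−1}) = Id (it represents an involution). Then there exists a unique matrix Δ(q), unitriangular with off-diagonal entries in qℤ[q], such that A(q)·Δ(q^{−1}) = Δ(q), i.e., the columns of Δ(q) are bar-invariant and congruent to the standard basis modulo qL where L is the ℤ[q]-lattice spanned by the standard basis. -/

import Mathlib

open LaurentPolynomial

open Finsupp
noncomputable section KLAux

/-- The "positive part" of a Laurent polynomial. -/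
def kl_pos (f : LaurentPolynomial ℤ) : LaurentPolynomial ℤ :=
  AddMonoidAlgebra.ofCoeff (Finsupp.filter (fun k => 0 < k) f.coeff)

lemma kl_pos_apply (f : LaurentPolynomial ℤ) (k : ℤ) :
    (kl_pos f).coeff k = if 0 < k then f.coeff k else 0 := rfl

lemma kl_pos_zero : kl_pos 0 = 0 := by
  ext k; rw [kl_pos_apply]; simp

section Bar
variable (bar : LaurentPolynomial ℤ ≃+* LaurentPolynomial ℤ)
  (hbar : ∀ k : ℤ, bar (T k) = T (-k))

include hbar in
lemma kl_bar_coeff (f : LaurentPolynomial ℤ) (k : ℤ) : (bar f).coeff (k) = f.coeff (-k) := by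
  induction f using AddMonoidAlgebra.induction with
  | zero => simp
  | single_add a b f ha hb ih =>
    have hs : (AddMonoidAlgebra.single a b : LaurentPolynomial ℤ) = C b * T a :=
      LaurentPolynomial.single_eq_C_mul_T b a
    have hC : (C b : LaurentPolynomial ℤ) = (b : LaurentPolynomial ℤ) :=
      eq_intCast LaurentPolynomial.C b
    have hsingle : bar (AddMonoidAlgebra.single a b : LaurentPolynomial ℤ) = AddMonoidAlgebra.single (-a) b := by
      rw [hs, map_mul, hbar, hC, map_intCast, ← hC, ← LaurentPolynomial.single_eq_C_mul_T]
    rw [map_add, hsingle, AddMonoidAlgebra.coeff_add, AddMonoidAlgebra.coeff_add, Finsupp.add_apply, Finsupp.add_apply, ih,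
      AddMonoidAlgebra.coeff_single, AddMonoidAlgebra.coeff_single, Finsupp.single_apply, Finsupp.single_apply]
    have hiff : (-a = k) ↔ (a = -k) := by omega
    simp [hiff]

include hbar in
lemma kl_bar_bar (f : LaurentPolynomial ℤ) : bar (bar f) = f := by
  ext k
  rw [kl_bar_coeff bar hbar, kl_bar_coeff bar hbar, neg_neg]

include hbar in
lemma kl_pos_sub (r : LaurentPolynomial ℤ) (hr : bar r = -r) :
    kl_pos r - bar (kl_pos r) = r := by
  ext k
  have hneg : ∀ m : ℤ, r.coeff (-m) = - r.coeff m := fun m => by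
    have : (bar r).coeff m = (-r).coeff m := congrArg (fun x => x.coeff m) hr
    rw [kl_bar_coeff bar hbar, AddMonoidAlgebra.coeff_neg, Finsupp.neg_apply] at this
    exact this
  have h0 : r.coeff 0 = 0 := by
    have := hneg 0
    rw [neg_zero] at this
    omega
  rw [AddMonoidAlgebra.coeff_sub, Finsupp.sub_apply, kl_bar_coeff bar hbar, kl_pos_apply, kl_pos_apply]
  rcases lt_trichotomy 0 k with h | h | h
  · rw [if_pos h, if_neg (by omega)]; ring
  · subst h; simpa using h0.symm
  · rw [if_neg (by omega), if_pos (by omega), hneg]; ring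

include hbar in
lemma kl_unique_scalar (d d' : LaurentPolynomial ℤ)
    (hd : ∀ k ≤ 0, d.coeff k = 0) (hd' : ∀ k ≤ 0, d'.coeff k = 0)
    (h : d - bar d = d' - bar d') : d = d' := by
  ext k
  have hk : (d - bar d).coeff k = (d' - bar d').coeff k := congrArg (fun x => x.coeff k) h
  rw [AddMonoidAlgebra.coeff_sub, AddMonoidAlgebra.coeff_sub, Finsupp.sub_apply, Finsupp.sub_apply, kl_bar_coeff bar hbar,
    kl_bar_coeff bar hbar] at hk
  rcases le_or_gt k 0 with hk0 | hk0
  · rw [hd k hk0, hd' k hk0]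
  · rw [hd (-k) (by omega), hd' (-k) (by omega)] at hk; omega

end Bar

lemma kl_exists_poly (f : LaurentPolynomial ℤ) (h : ∀ k ≤ 0, f.coeff k = 0) :
    ∃ g : Polynomial ℤ, f = Polynomial.toLaurent (Polynomial.X * g) := by
  induction f using AddMonoidAlgebra.induction with
  | zero => exact ⟨0, by simp⟩
  | single_add a b f ha hb ih =>
    have hf : ∀ k ≤ 0, f.coeff k = 0 := by
      intro k hk
      have := h k hk
      rw [AddMonoidAlgebra.coeff_add, Finsupp.add_apply, AddMonoidAlgebra.coeff_single, Finsupp.single_apply] at this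
      rcases eq_or_ne a k with rfl | hne
      · exact absurd this (by simpa [Finsupp.notMem_support_iff.mp ha] using hb)
      · simpa [hne] using this
    have hapos : 0 < a := by
      by_contra hc
      have := h a (by omega)
      rw [AddMonoidAlgebra.coeff_add, Finsupp.add_apply, AddMonoidAlgebra.coeff_single, Finsupp.single_apply, if_pos rfl,
        Finsupp.notMem_support_iff.mp ha] at this
      omega
    obtain ⟨g, hg⟩ := ih hf
    refine ⟨Polynomial.C b * Polynomial.X ^ (a.toNat - 1) + g, ?_⟩
    have hX : Polynomial.X * (Polynomial.C b * Polynomial.X ^ (a.toNat - 1) + g)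
        = Polynomial.C b * Polynomial.X ^ ((a.toNat - 1) + 1) + Polynomial.X * g := by
      ring
    rw [hX, map_add, Polynomial.toLaurent_C_mul_X_pow, ← hg,
      LaurentPolynomial.single_eq_C_mul_T]
    congr 2
    congr 1
    omega

lemma kl_poly_coeff (g : Polynomial ℤ) (k : ℤ) (hk : k ≤ 0) :
    (Polynomial.toLaurent (Polynomial.X * g)).coeff k = 0 := by
  rw [← Finsupp.notMem_support_iff]
  intro hmem
  rw [LaurentPolynomial.support_coeff_toLaurent] at hmem
  obtain ⟨n, hn, hnk⟩ := Finset.mem_map.mp hmem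
  have hn0 : (n : ℤ) = k := hnk
  have : n = 0 := by omega
  subst this
  rw [Polynomial.mem_support_iff, Polynomial.mul_coeff_zero] at hn
  simp at hn

section MatrixPart

variable {I : Type*} [Fintype I] [DecidableEq I] [PartialOrder I]

open scoped Classical in
/-- The recursively defined canonical-basis column. -/
noncomputable def klCol (A : Matrix I I (LaurentPolynomial ℤ))
    (bar : LaurentPolynomial ℤ ≃+* LaurentPolynomial ℤ) (μ : I) (l : I) :
    LaurentPolynomial ℤ :=
  if l = μ then 1 else
    kl_pos (∑ ν : I, if h : l < ν then A l ν * bar (klCol A bar μ ν) else 0)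
termination_by (Finset.filter (fun x => l < x) Finset.univ).card
decreasing_by
  refine Finset.card_lt_card ?_
  rw [Finset.ssubset_iff_of_subset (fun x hx => ?_)]
  · exact ⟨ν, Finset.mem_filter.mpr ⟨Finset.mem_univ _, h⟩,
      fun hc => lt_irrefl ν (Finset.mem_filter.mp hc).2⟩
  · exact Finset.mem_filter.mpr ⟨Finset.mem_univ _, lt_trans h (Finset.mem_filter.mp hx).2⟩

variable (A : Matrix I I (LaurentPolynomial ℤ))
variable (bar : LaurentPolynomial ℤ ≃+* LaurentPolynomial ℤ)

lemma klCol_self (μ : I) : klCol A bar μ μ = 1 := by rw [klCol]; simp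

open scoped Classical in
lemma klCol_ne {μ l : I} (h : l ≠ μ) :
    klCol A bar μ l
      = kl_pos (∑ ν : I, if l < ν then A l ν * bar (klCol A bar μ ν) else 0) := by
  rw [klCol]
  simp [h]

lemma klCol_coeff {μ l : I} (h : l ≠ μ) : ∀ k ≤ 0, (klCol A bar μ l).coeff k = 0 := by
  intro k hk
  rw [klCol_ne A bar h, kl_pos_apply, if_neg (by omega)]

lemma klCol_le (hAtri : ∀ i j, A i j ≠ 0 → i ≤ j) (μ : I) :
    ∀ l, klCol A bar μ l ≠ 0 → l ≤ μ := by
  classical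
  intro l
  refine wellFounded_gt.induction (C := fun l => klCol A bar μ l ≠ 0 → l ≤ μ) l ?_
  intro x IH hx
  rcases eq_or_ne x μ with rfl | hne
  · exact le_refl _
  · rw [klCol_ne A bar hne] at hx
    have hsum : (∑ ν : I, if x < ν then A x ν * bar (klCol A bar μ ν) else 0) ≠ 0 := by
      intro h0
      rw [h0, kl_pos_zero] at hx
      exact hx rfl
    obtain ⟨ν, _, hν⟩ := Finset.exists_ne_zero_of_sum_ne_zero hsum
    by_cases hlt : x < ν
    · rw [if_pos hlt] at hν
      have hc : klCol A bar μ ν ≠ 0 := by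
        intro h0
        rw [h0, map_zero, mul_zero] at hν
        exact hν rfl
      exact le_of_lt (lt_of_lt_of_le hlt (IH ν hlt hc))
    · rw [if_neg hlt] at hν
      exact absurd rfl hν

open scoped Classical in
lemma kl_sum_split {M : Type*} [AddCommMonoid M] (f : I → M) (l : I)
    (h0 : ∀ ρ, ρ ≠ l → ¬ l < ρ → f ρ = 0) :
    ∑ ρ : I, f ρ = f l + ∑ ρ : I, if l < ρ then f ρ else 0 := by
  have key : ∀ ρ : I, f ρ = (if ρ = l then f ρ else 0) + (if l < ρ then f ρ else 0) := by
    intro ρ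
    rcases eq_or_ne ρ l with rfl | hne
    · simp [lt_irrefl]
    · by_cases hlt : l < ρ
      · simp [hne, hlt]
      · simp [hne, hlt, h0 ρ hne hlt]
  rw [Finset.sum_congr rfl (fun ρ _ => key ρ), Finset.sum_add_distrib,
    Finset.sum_ite_eq' Finset.univ l f]
  simp

open scoped Classical in
lemma kl_split_col (hAdiag : ∀ i, A i i = 1) (hAtri : ∀ i j, A i j ≠ 0 → i ≤ j)
    (c : I → LaurentPolynomial ℤ) (l : I) :
    ∑ ρ : I, A l ρ * bar (c ρ)
      = bar (c l) + ∑ ν : I, if l < ν then A l ν * bar (c ν) else 0 := by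
  have key := kl_sum_split (fun ρ => A l ρ * bar (c ρ)) l ?_
  · rw [key, hAdiag, one_mul]
  · intro ρ hne hnlt
    have hA : A l ρ = 0 := by
      by_contra hz
      exact hnlt (lt_of_le_of_ne (hAtri l ρ hz) (Ne.symm hne))
    simp [hA]

open scoped Classical in
lemma klCol_main
    (hbar : ∀ k : ℤ, bar (T k) = T (-k))
    (hAdiag : ∀ i, A i i = 1) (hAtri : ∀ i j, A i j ≠ 0 → i ≤ j)
    (hBA : ∀ l ρ, (∑ ν : I, bar (A l ν) * A ν ρ) = if l = ρ then 1 else 0)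
    (μ : I) :
    ∀ l, ∑ ρ : I, A l ρ * bar (klCol A bar μ ρ) = klCol A bar μ l := by
  intro l
  refine wellFounded_gt.induction
    (C := fun l => ∑ ρ : I, A l ρ * bar (klCol A bar μ ρ) = klCol A bar μ l) l ?_
  intro l IH
  set c : I → LaurentPolynomial ℤ := klCol A bar μ with hc
  set Rl : LaurentPolynomial ℤ := ∑ ν : I, if l < ν then A l ν * bar (c ν) else 0 with hRl
  have hS : ∑ ρ : I, A l ρ * bar (c ρ) = bar (c l) + Rl :=
    kl_split_col A bar hAdiag hAtri c l
  rcases eq_or_ne l μ with rfl | hne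
  · have hR0 : Rl = 0 := by
      rw [hRl]
      refine Finset.sum_eq_zero fun ν _ => ?_
      by_cases hlt : l < ν
      · rw [if_pos hlt]
        have h0 : c ν = 0 := by
          by_contra hz
          exact absurd (klCol_le A bar hAtri l ν hz) (not_le_of_gt hlt)
        rw [h0, map_zero, mul_zero]
      · rw [if_neg hlt]
    rw [hS, hR0, add_zero]
    have : c l = 1 := klCol_self A bar l
    rw [this, map_one]
  · -- the key antisymmetry computation
    have e1 : ∑ ν : I, bar (A l ν) * c ν
        = c l + ∑ ν : I, if l < ν then bar (A l ν) * c ν else 0 := by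
      have := kl_sum_split (fun ν => bar (A l ν) * c ν) l ?_
      · rw [this, hAdiag, map_one, one_mul]
      · intro ρ hρne hρnlt
        have hA : A l ρ = 0 := by
          by_contra hz
          exact hρnlt (lt_of_le_of_ne (hAtri l ρ hz) (Ne.symm hρne))
        simp [hA]
    have e2 : ∑ ν : I, (if l < ν then bar (A l ν) * c ν else 0)
        = ∑ ν : I, if l < ν then bar (A l ν) * (∑ ρ : I, A ν ρ * bar (c ρ)) else 0 := by
      refine Finset.sum_congr rfl fun ν _ => ?_
      by_cases hlt : l < ν
      · rw [if_pos hlt, if_pos hlt, IH ν hlt]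
      · rw [if_neg hlt, if_neg hlt]
    have e3 : ∑ ν : I, (if l < ν then bar (A l ν) * (∑ ρ : I, A ν ρ * bar (c ρ)) else 0)
        = (∑ ν : I, bar (A l ν) * (∑ ρ : I, A ν ρ * bar (c ρ)))
          - bar (A l l) * (∑ ρ : I, A l ρ * bar (c ρ)) := by
      have := kl_sum_split (fun ν => bar (A l ν) * (∑ ρ : I, A ν ρ * bar (c ρ))) l ?_
      · rw [this]; ring
      · intro ρ hρne hρnlt
        have hA : A l ρ = 0 := by
          by_contra hz
          exact hρnlt (lt_of_le_of_ne (hAtri l ρ hz) (Ne.symm hρne))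
        simp [hA]
    have e4 : ∑ ν : I, bar (A l ν) * (∑ ρ : I, A ν ρ * bar (c ρ)) = bar (c l) := by
      have swap : ∑ ν : I, bar (A l ν) * (∑ ρ : I, A ν ρ * bar (c ρ))
          = ∑ ρ : I, (∑ ν : I, bar (A l ν) * A ν ρ) * bar (c ρ) := by
        simp_rw [Finset.mul_sum, Finset.sum_mul]
        rw [Finset.sum_comm]
        congr 1; funext ν; congr 1; funext ρ; ring
      rw [swap]
      have : ∀ ρ : I, (∑ ν : I, bar (A l ν) * A ν ρ) * bar (c ρ)
          = if l = ρ then bar (c ρ) else 0 := by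
        intro ρ
        rw [hBA l ρ]
        by_cases h : l = ρ <;> simp [h]
      rw [Finset.sum_congr rfl (fun ρ _ => this ρ), Finset.sum_ite_eq Finset.univ l]
      simp
    have ebar : bar (∑ ρ : I, A l ρ * bar (c ρ)) = ∑ ν : I, bar (A l ν) * c ν := by
      rw [map_sum]
      refine Finset.sum_congr rfl fun ν _ => ?_
      rw [map_mul, kl_bar_bar bar hbar]
    -- combine
    have hcomb : bar (∑ ρ : I, A l ρ * bar (c ρ))
        = c l + bar (c l) - (∑ ρ : I, A l ρ * bar (c ρ)) := by
      rw [ebar, e1, e2, e3, e4, hAdiag, map_one, one_mul]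
      ring
    have hanti : bar Rl = - Rl := by
      have h1 : bar (bar (c l) + Rl) = c l + bar Rl := by
        rw [map_add, kl_bar_bar bar hbar]
      rw [hS] at hcomb
      rw [h1] at hcomb
      linear_combination hcomb
    have hpos := kl_pos_sub bar hbar Rl hanti
    have hcl : c l = kl_pos Rl := klCol_ne A bar hne
    rw [hS, hcl]
    linear_combination -hpos

open scoped Classical in
lemma klCol_uniq
    (hbar : ∀ k : ℤ, bar (T k) = T (-k))
    (hAdiag : ∀ i, A i i = 1) (hAtri : ∀ i j, A i j ≠ 0 → i ≤ j)
    (hBA : ∀ l ρ, (∑ ν : I, bar (A l ν) * A ν ρ) = if l = ρ then 1 else 0)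
    (Δ' : Matrix I I (LaurentPolynomial ℤ))
    (h1 : ∀ i, Δ' i i = 1)
    (h3 : ∀ i j, i ≠ j → ∃ g : Polynomial ℤ, Δ' i j = Polynomial.toLaurent (Polynomial.X * g))
    (h4 : A * Δ'.map bar = Δ') (μ : I) :
    ∀ l, Δ' l μ = klCol A bar μ l := by
  intro l
  refine wellFounded_gt.induction (C := fun l => Δ' l μ = klCol A bar μ l) l ?_
  intro l IH
  set c : I → LaurentPolynomial ℤ := klCol A bar μ with hc
  set Rl : LaurentPolynomial ℤ := ∑ ν : I, if l < ν then A l ν * bar (c ν) else 0 with hRl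
  have hent : ∑ ρ : I, A l ρ * bar (Δ' ρ μ) = Δ' l μ := by
    have hm := Matrix.ext_iff.2 h4 l μ
    rw [Matrix.mul_apply] at hm
    simpa [Matrix.map_apply] using hm
  have hsplitΔ : ∑ ρ : I, A l ρ * bar (Δ' ρ μ)
      = bar (Δ' l μ) + ∑ ν : I, if l < ν then A l ν * bar (Δ' ν μ) else 0 :=
    kl_split_col A bar hAdiag hAtri (fun ρ => Δ' ρ μ) l
  have hRsame : (∑ ν : I, if l < ν then A l ν * bar (Δ' ν μ) else 0) = Rl := by
    rw [hRl]
    refine Finset.sum_congr rfl fun ν _ => ?_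
    by_cases hlt : l < ν
    · rw [if_pos hlt, if_pos hlt, IH ν hlt]
    · rw [if_neg hlt, if_neg hlt]
  have hdelta : Δ' l μ - bar (Δ' l μ) = Rl := by
    linear_combination hsplitΔ - hent + hRsame
  have hcol : c l - bar (c l) = Rl := by
    have hmain := klCol_main A bar hbar hAdiag hAtri hBA μ l
    have hsplitc : ∑ ρ : I, A l ρ * bar (c ρ)
        = bar (c l) + Rl := kl_split_col A bar hAdiag hAtri c l
    rw [hsplitc] at hmain
    linear_combination -hmain
  rcases eq_or_ne l μ with rfl | hne
  · rw [h1, hc, klCol_self]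
  · refine kl_unique_scalar bar hbar (Δ' l μ) (c l) ?_ ?_ (by rw [hdelta, hcol])
    · obtain ⟨g, hg⟩ := h3 l μ hne
      intro k hk
      rw [hg]
      exact kl_poly_coeff g k hk
    · exact klCol_coeff A bar hne

end MatrixPart

end KLAux

/-- Kazhdan–Lusztig-type existence and uniqueness: if `A(q)` is a unitriangular matrix over
`ℤ[q,q⁻¹]` with `A(q)·A(q⁻¹) = 1` (`bar` being the substitution `q ↦ q⁻¹`), then there is a
unique unitriangular matrix `Δ(q)` with off-diagonal entries in `qℤ[q]` such that
`A(q)·Δ(q⁻¹) = Δ(q)`. -/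
theorem canonical_basis_matrix_exists_unique
    {I : Type*} [Fintype I] [DecidableEq I] [PartialOrder I]
    (bar : LaurentPolynomial ℤ ≃+* LaurentPolynomial ℤ)
    (hbar : ∀ k : ℤ, bar (T k) = T (-k))
    (A : Matrix I I (LaurentPolynomial ℤ))
    (hAdiag : ∀ i, A i i = 1)
    (hAtri : ∀ i j, A i j ≠ 0 → i ≤ j)
    (hAinv : A * A.map bar = 1) :
    ∃! Δ : Matrix I I (LaurentPolynomial ℤ),
      (∀ i, Δ i i = 1) ∧
      (∀ i j, Δ i j ≠ 0 → i ≤ j) ∧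
      (∀ i j, i ≠ j → ∃ g : Polynomial ℤ, Δ i j = Polynomial.toLaurent (Polynomial.X * g)) ∧
      A * Δ.map bar = Δ := by
  classical
  have hABbar : A.map bar * A = 1 := mul_eq_one_comm.mp hAinv
  have hBA : ∀ l ρ, (∑ ν : I, bar (A l ν) * A ν ρ) = if l = ρ then 1 else 0 := by
    intro l ρ
    have hm := Matrix.ext_iff.2 hABbar l ρ
    rw [Matrix.mul_apply, Matrix.one_apply] at hm
    simpa [Matrix.map_apply] using hm
  refine ⟨Matrix.of fun l μ => klCol A bar μ l,
    ⟨fun i => klCol_self A bar i,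
     fun i j h => klCol_le A bar hAtri j i h,
     fun i j hne => kl_exists_poly _ (klCol_coeff A bar hne),
     ?_⟩, ?_⟩
  · refine Matrix.ext_iff.mp fun i j => ?_
    rw [Matrix.mul_apply]
    simp only [Matrix.map_apply, Matrix.of_apply]
    exact klCol_main A bar hbar hAdiag hAtri hBA j i
  · rintro Δ' ⟨h1, h2, h3, h4⟩
    refine Matrix.ext_iff.mp fun i j => ?_
    exact klCol_uniq A bar hbar hAdiag hAtri hBA Δ' h1 h3 h4 j i
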